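/- arXiv:2005.13927 — 2 statements merged into one kernel-verified Lean document; each statement's English description precedes it below -/
import Mathlib

section
/- Let 𝔤 be the 2-dimensional Lie algebra with orthonormal basis {e₁,e₂}, bracket [e₁,e₂] = −λ⁻¹e₁, and U as above. Suppose K : 𝔤 × 𝔤 → 𝔤 is symmetric bilinear, self-adjoint (⟨K(X,Y),Z⟩ = ⟨Y,K(X,Z)⟩), and satisfies the total symmetry condition (∇^g_{e₁}K)(e₂,e₂) = (∇^g_{e₂}K)(e₁,e₂) and (∇^g_{e₁}K)(e₂,e₁) = (∇^g_{e₂}K)(e₁,e₁), where ∇^g_{e₁}e₁ = λ⁻¹e₂, ∇^g_{e₁}e₂ = −λ⁻¹e₁, ∇^g_{e₂}e₁ = ∇^g_{e₂}e₂ = 0. Then there exists p ∈ ℝ with K(e₁,e₁) = p e₂, K(e₁,e₂) = p e₁, K(e₂,e₂) = 2p e₂. -/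
open scoped RealInnerProductSpace

/-- Let `𝔤` be the 2-dimensional Lie algebra with orthonormal basis `{e₁,e₂}`, bracket
`[e₁,e₂] = −λ⁻¹e₁`, and Levi-Civita connection `∇^g` given on the basis by
`∇^g_{e₁}e₁ = λ⁻¹e₂`, `∇^g_{e₁}e₂ = −λ⁻¹e₁`, `∇^g_{e₂}e₁ = ∇^g_{e₂}e₂ = 0`.
Suppose `K` is symmetric bilinear, self-adjoint, and satisfies the total symmetry
conditions `(∇^g_{e₁}K)(e₂,e₂) = (∇^g_{e₂}K)(e₁,e₂)` and
`(∇^g_{e₁}K)(e₂,e₁) = (∇^g_{e₂}K)(e₁,e₁)`, where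
`(∇^g_X K)(Y,Z) = ∇^g_X(K(Y,Z)) − K(∇^g_X Y, Z) − K(Y, ∇^g_X Z)`.
Then there exists `p ∈ ℝ` with `K(e₁,e₁) = p e₂`, `K(e₁,e₂) = p e₁`,
`K(e₂,e₂) = 2p e₂`. -/
theorem stmt18 (V : Type*) [NormedAddCommGroup V] [InnerProductSpace ℝ V]
    (e₁ e₂ : V) (lam : ℝ) (hlam : 0 < lam)
    (h11 : ⟪e₁, e₁⟫ = 1) (h22 : ⟪e₂, e₂⟫ = 1) (h12 : ⟪e₁, e₂⟫ = 0)
    (hspan : Submodule.span ℝ ({e₁, e₂} : Set V) = ⊤)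
    (lc K : V →ₗ[ℝ] V →ₗ[ℝ] V)
    (hlc11 : lc e₁ e₁ = lam⁻¹ • e₂) (hlc12 : lc e₁ e₂ = -(lam⁻¹ • e₁))
    (hlc21 : lc e₂ e₁ = 0) (hlc22 : lc e₂ e₂ = 0)
    (hKsym : ∀ X Y, K X Y = K Y X)
    (hKsa : ∀ X Y Z, ⟪K X Y, Z⟫ = ⟪Y, K X Z⟫)
    (cdK : V → V → V → V)
    (hcdK : ∀ X Y Z, cdK X Y Z = lc X (K Y Z) - K (lc X Y) Z - K Y (lc X Z))
    (hts1 : cdK e₁ e₂ e₂ = cdK e₂ e₁ e₂)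
    (hts2 : cdK e₁ e₂ e₁ = cdK e₂ e₁ e₁) :
    ∃ p : ℝ, K e₁ e₁ = p • e₂ ∧ K e₁ e₂ = p • e₁ ∧ K e₂ e₂ = (2 * p) • e₂ := by
  have h21 : ⟪e₂, e₁⟫ = 0 := by rw [real_inner_comm]; exact h12
  have n1 : ‖e₁‖ ^ 2 = 1 := by rw [← real_inner_self_eq_norm_sq]; exact h11
  have n2 : ‖e₂‖ ^ 2 = 1 := by rw [← real_inner_self_eq_norm_sq]; exact h22
  obtain ⟨a, b, hK11⟩ := Submodule.mem_span_pair.mp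
    (hspan ▸ Submodule.mem_top : K e₁ e₁ ∈ Submodule.span ℝ ({e₁, e₂} : Set V))
  obtain ⟨c, d, hK12⟩ := Submodule.mem_span_pair.mp
    (hspan ▸ Submodule.mem_top : K e₁ e₂ ∈ Submodule.span ℝ ({e₁, e₂} : Set V))
  obtain ⟨f, g, hK22⟩ := Submodule.mem_span_pair.mp
    (hspan ▸ Submodule.mem_top : K e₂ e₂ ∈ Submodule.span ℝ ({e₁, e₂} : Set V))
  have hlne : lam⁻¹ ≠ 0 := inv_ne_zero hlam.ne'
  -- b = c from self-adjointness
  have hbc : b = c := by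
    have h := hKsa e₁ e₁ e₂
    rw [← hK11, ← hK12] at h
    simpa [inner_add_left, inner_add_right, real_inner_smul_left, real_inner_smul_right,
      h11, h22, h12, h21, n1, n2] using h
  -- f = d from self-adjointness
  have hfd : f = d := by
    have h := hKsa e₂ e₂ e₁
    rw [← hK22, hKsym e₂ e₁, ← hK12] at h
    simpa [inner_add_left, inner_add_right, real_inner_smul_left, real_inner_smul_right,
      h11, h22, h12, h21, n1, n2] using h
  -- first total symmetry condition
  have H1 : lc e₁ (K e₂ e₂) - K (lc e₁ e₂) e₂ - K e₂ (lc e₁ e₂)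
      = lc e₂ (K e₁ e₂) - K (lc e₂ e₁) e₂ - K e₁ (lc e₂ e₂) := by
    rw [← hcdK, ← hcdK]; exact hts1
  rw [← hK22, ← hK12, hlc12, hlc21, hlc22] at H1
  have H1' : (f • (lam⁻¹ • e₂) + g • (-(lam⁻¹ • e₁)))
      + lam⁻¹ • (c • e₁ + d • e₂) + lam⁻¹ • (c • e₁ + d • e₂) = 0 := by
    have e1 : lc e₁ (f • e₁ + g • e₂) = f • (lam⁻¹ • e₂) + g • (-(lam⁻¹ • e₁)) := by
      simp [map_add, map_smul, hlc11, hlc12]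
    have e2 : K (-(lam⁻¹ • e₁)) e₂ = -(lam⁻¹ • (c • e₁ + d • e₂)) := by
      simp [map_neg, map_smul, hK12]
    have e3 : K e₂ (-(lam⁻¹ • e₁)) = -(lam⁻¹ • (c • e₁ + d • e₂)) := by
      rw [hKsym]; exact e2
    rw [e1, e2, e3] at H1
    simp only [map_zero, map_smul, LinearMap.smul_apply, LinearMap.zero_apply,
      LinearMap.map_zero] at H1
    have : lc e₂ (c • e₁ + d • e₂) = 0 := by simp [map_add, map_smul, hlc21, hlc22]
    rw [this] at H1
    linear_combination (norm := module) H1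
  have H1e1 : -(g * lam⁻¹) + lam⁻¹ * c + lam⁻¹ * c = 0 := by
    have := congrArg (fun v => ⟪v, e₁⟫) H1'
    simpa [inner_add_left, inner_smul_left, inner_neg_left, real_inner_smul_left,
      h11, h21, h12, n1] using this
  have H1e2 : f * lam⁻¹ + lam⁻¹ * d + lam⁻¹ * d = 0 := by
    have := congrArg (fun v => ⟪v, e₂⟫) H1'
    simpa [inner_add_left, inner_smul_left, inner_neg_left, real_inner_smul_left,
      h22, h21, h12, n2] using this
  -- second total symmetry condition
  have H2 : lc e₁ (K e₂ e₁) - K (lc e₁ e₂) e₁ - K e₂ (lc e₁ e₁)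
      = lc e₂ (K e₁ e₁) - K (lc e₂ e₁) e₁ - K e₁ (lc e₂ e₁) := by
    rw [← hcdK, ← hcdK]; exact hts2
  rw [hKsym e₂ e₁, ← hK12, ← hK11, hlc12, hlc11, hlc21] at H2
  have H2' : (c • (lam⁻¹ • e₂) + d • (-(lam⁻¹ • e₁)))
      + lam⁻¹ • (a • e₁ + b • e₂) - lam⁻¹ • (f • e₁ + g • e₂) = 0 := by
    have e1 : lc e₁ (c • e₁ + d • e₂) = c • (lam⁻¹ • e₂) + d • (-(lam⁻¹ • e₁)) := by
      simp [map_add, map_smul, hlc11, hlc12]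
    have e2 : K (-(lam⁻¹ • e₁)) e₁ = -(lam⁻¹ • (a • e₁ + b • e₂)) := by
      simp [map_neg, map_smul, hK11]
    have e3 : K e₂ (lam⁻¹ • e₂) = lam⁻¹ • (f • e₁ + g • e₂) := by
      simp [map_smul, hK22]
    rw [e1, e2, e3] at H2
    have h0 : lc e₂ (a • e₁ + b • e₂) = 0 := by simp [map_add, map_smul, hlc21, hlc22]
    rw [h0] at H2
    simp only [map_zero, LinearMap.map_zero, LinearMap.zero_apply] at H2
    linear_combination (norm := module) H2
  have H2e1 : -(d * lam⁻¹) + lam⁻¹ * a - lam⁻¹ * f = 0 := by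
    have := congrArg (fun v => ⟪v, e₁⟫) H2'
    simpa [inner_add_left, inner_sub_left, inner_smul_left, inner_neg_left,
      real_inner_smul_left, h11, h21, h12, n1] using this
  -- solve the scalar system
  have hd : d = 0 := by
    have : lam⁻¹ * (3 * d) = 0 := by linear_combination H1e2 - lam⁻¹ * hfd
    rcases mul_eq_zero.mp this with h | h
    · exact absurd h hlne
    · linarith
  have hg : g = 2 * c := by
    have : lam⁻¹ * (2 * c - g) = 0 := by ring_nf; ring_nf at H1e1; linarith
    rcases mul_eq_zero.mp this with h | h
    · exact absurd h hlne
    · linarith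
  have ha : a = 0 := by
    have : lam⁻¹ * (a - d - f) = 0 := by ring_nf; ring_nf at H2e1; linarith
    rcases mul_eq_zero.mp this with h | h
    · exact absurd h hlne
    · rw [hfd] at h; linarith
  refine ⟨b, ?_, ?_, ?_⟩
  · rw [← hK11, ha]; simp
  · rw [← hK12, hbc, hd]; simp
  · rw [← hK22, hfd, hd, hg, ← hbc]; simp [two_mul]
end

section
/- For the statistical Lie group structure on the space of normal distributions (λ = √2), the left-invariant connections ∇^(α) defined in the orthonormal frame {e₁, e₂} by ∇^(α)_{e₁}e₁ = ((1−α)/√2)e₂, ∇^(α)_{e₁}e₂ = −((1+α)/√2)e₁, ∇^(α)_{e₂}e₁ = −(α/√2)e₁, ∇^(α)_{e₂}e₂ = −(√2 α)e₂ coincide, under e₁ = y∂_x and e₂ = (y/√2)∂_y, with the Amari–Chentsov α-connections: ∇^(α)_{∂x}∂x = ((1−α)/(2y))∂y, ∇^(α)_{∂x}∂y = ∇^(α)_{∂y}∂x = −((1+α)/y)∂x, ∇^(α)_{∂y}∂y = −((1+2α)/y)∂y. -/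
open scoped BigOperators

/-- Partial derivative in the `i`-th coordinate on `ℝ × ℝ`. -/
noncomputable def pder (i : Fin 2) (f : ℝ × ℝ → ℝ) (p : ℝ × ℝ) : ℝ :=
  if i = 0 then deriv (fun t => f (t, p.2)) p.1 else deriv (fun t => f (p.1, t)) p.2

/-- The Christoffel symbols of the Amari–Chentsov `α`-connection on
`M = ℝ × ℝ⁺` with the Fisher metric: `∇^(α)_{∂x}∂x = ((1−α)/(2y))∂y`,
`∇^(α)_{∂x}∂y = ∇^(α)_{∂y}∂x = −((1+α)/y)∂x`, `∇^(α)_{∂y}∂y = −((1+2α)/y)∂y`. -/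
noncomputable def amariChristoffel (α : ℝ) (k i j : Fin 2) (p : ℝ × ℝ) : ℝ :=
  if k = 1 ∧ i = 0 ∧ j = 0 then (1 - α) / (2 * p.2)
  else if k = 0 ∧ ((i = 0 ∧ j = 1) ∨ (i = 1 ∧ j = 0)) then -((1 + α) / p.2)
  else if k = 1 ∧ i = 1 ∧ j = 1 then -((1 + 2 * α) / p.2)
  else 0

/-- The covariant derivative `(∇^(α)_V W)^k = V^i ∂_i W^k + Γ^k_{ij} V^i W^j`. -/
noncomputable def amariCovDeriv (α : ℝ) (Vf Wf : ℝ × ℝ → Fin 2 → ℝ) (p : ℝ × ℝ) :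
    Fin 2 → ℝ :=
  fun k => (∑ i : Fin 2, Vf p i * pder i (fun q => Wf q k) p) +
    ∑ i : Fin 2, ∑ j : Fin 2, amariChristoffel α k i j p * Vf p i * Wf p j

/-- The orthonormal frame `e₁ = y ∂_x` for the Fisher metric. -/
noncomputable def eOne : ℝ × ℝ → Fin 2 → ℝ := fun p => ![p.2, 0]

/-- The orthonormal frame `e₂ = (y/√2) ∂_y` for the Fisher metric. -/
noncomputable def eTwo : ℝ × ℝ → Fin 2 → ℝ := fun p => ![0, p.2 / Real.sqrt 2]

/-- The Amari–Chentsov `α`-connections, expressed in the orthonormal frame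
`e₁ = y∂_x`, `e₂ = (y/√2)∂_y` of the Fisher metric (`λ = √2`), satisfy
`∇^(α)_{e₁}e₁ = ((1−α)/√2)e₂`, `∇^(α)_{e₁}e₂ = −((1+α)/√2)e₁`,
`∇^(α)_{e₂}e₁ = −(α/√2)e₁`, `∇^(α)_{e₂}e₂ = −(√2 α)e₂`; i.e. the left-invariant
connection given by these frame formulas coincides with the coordinate expression of
the Amari–Chentsov `α`-connection. -/
theorem stmt19 (α : ℝ) (p : ℝ × ℝ) (hp : 0 < p.2) :
    amariCovDeriv α eOne eOne p = ((1 - α) / Real.sqrt 2) • eTwo p ∧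
    amariCovDeriv α eOne eTwo p = (-((1 + α) / Real.sqrt 2)) • eOne p ∧
    amariCovDeriv α eTwo eOne p = (-(α / Real.sqrt 2)) • eOne p ∧
    amariCovDeriv α eTwo eTwo p = (-(Real.sqrt 2 * α)) • eTwo p := by
  have hy := hp.ne'
  have hs : Real.sqrt 2 ≠ 0 := by positivity
  have hs2 : Real.sqrt 2 * Real.sqrt 2 = 2 := Real.mul_self_sqrt (by norm_num)
  refine ⟨?_, ?_, ?_, ?_⟩ <;> funext k <;> fin_cases k <;>
    simp [amariCovDeriv, pder, amariChristoffel, eOne, eTwo, Fin.sum_univ_two] <;>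
    field_simp <;> ring_nf <;>
    simp only [Real.sq_sqrt (show (0:ℝ) ≤ 2 by norm_num)] <;> ring
end
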